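/- Let M be a model category, let x be an object, and let SCyl^•(x) be a special cylinder object for x. Then SCyl^•(x) is weakly terminal among cylinder objects for x: for any cylinder object Cyl^•(x), there exists a map of cosimplicial objects Cyl^•(x) → SCyl^•(x) commuting with the identifications of the 0-th objects with x. -/

import Mathlib

open CategoryTheory CategoryTheory.Limits

universe v u

/-- A class of morphisms is closed under retracts. -/
def RetractClosed {M : Type u} [Category.{v} M] (P : MorphismProperty M) : Prop :=
  ∀ ⦃a b c d : M⦄ (f : a ⟶ b) (g : c ⟶ d) (ia : a ⟶ c) (ra : c ⟶ a) (ib : b ⟶ d) (rb : d ⟶ b),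
    ia ≫ ra = 𝟙 a → ib ≫ rb = 𝟙 b → ia ≫ g = f ≫ ib → ra ≫ f = g ≫ rb → P g → P f

/-- A (Quillen) model structure on a finitely bicomplete category `M`. -/
class ModelCategory (M : Type u) [Category.{v} M] [HasFiniteLimits M] [HasFiniteColimits M] :
    Type (max u v) where
  W : MorphismProperty M
  Cof : MorphismProperty M
  Fib : MorphismProperty M
  w_id : ∀ x : M, W (𝟙 x)
  w_comp : ∀ {x y z : M} (f : x ⟶ y) (g : y ⟶ z), W f → W g → W (f ≫ g)
  w_cancel_left : ∀ {x y z : M} (f : x ⟶ y) (g : y ⟶ z), W f → W (f ≫ g) → W g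
  w_cancel_right : ∀ {x y z : M} (f : x ⟶ y) (g : y ⟶ z), W g → W (f ≫ g) → W f
  w_retract : RetractClosed W
  cof_retract : RetractClosed Cof
  fib_retract : RetractClosed Fib
  lift_cof_triv : ∀ {a b x y : M} (i : a ⟶ b) (p : x ⟶ y),
    Cof i → W i → Fib p → HasLiftingProperty i p
  lift_triv_fib : ∀ {a b x y : M} (i : a ⟶ b) (p : x ⟶ y),
    Cof i → Fib p → W p → HasLiftingProperty i p
  factor_cw_f : ∀ {x y : M} (f : x ⟶ y), ∃ (z : M) (i : x ⟶ z) (p : z ⟶ y),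
    Cof i ∧ W i ∧ Fib p ∧ i ≫ p = f
  factor_c_wf : ∀ {x y : M} (f : x ⟶ y), ∃ (z : M) (i : x ⟶ z) (p : z ⟶ y),
    Cof i ∧ Fib p ∧ W p ∧ i ≫ p = f

namespace ModelCategory

variable {M : Type u} [Category.{v} M] [HasFiniteLimits M] [HasFiniteColimits M] [ModelCategory M]

/-- An object is cofibrant if the map from the initial object is a cofibration. -/
def Cofibrant (x : M) : Prop := Cof (M := M) (initial.to x)

/-- An object is fibrant if the map to the terminal object is a fibration. -/
def Fibrant (x : M) : Prop := Fib (M := M) (terminal.from x)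

end ModelCategory
variable {M : Type u} [Category.{v} M]

/-- The latching category of `Δ` at `[n]`: proper monomorphisms `[m] ↪ [n]`. -/
abbrev CosimplicialLatchingCat (n : ℕ) : Type :=
  ObjectProperty.FullSubcategory (fun f : Over (SimplexCategory.mk n) => Mono f.hom ∧ f.left.len < n)

/-- The latching diagram of a cosimplicial object at `[n]`. -/
def cosimplicialLatchingDiagram (X : CosimplicialObject M) (n : ℕ) :
    CosimplicialLatchingCat n ⥤ M :=
  ObjectProperty.ι _ ⋙ Over.forget _ ⋙ X

/-- The canonical cocone on the latching diagram with apex `X.obj [n]`. -/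
def cosimplicialLatchingCocone (X : CosimplicialObject M) (n : ℕ) :
    Cocone (cosimplicialLatchingDiagram X n) where
  pt := X.obj (SimplexCategory.mk n)
  ι :=
    { app := fun f => X.map f.obj.hom
      naturality := by
        intro f g u
        show X.map u.hom.left ≫ X.map g.obj.hom = X.map f.obj.hom ≫ 𝟙 _
        rw [← X.map_comp, Over.w u.hom, Category.comp_id] }

/-- The latching map `Latch_n X → X^n` of a cosimplicial object. -/
noncomputable def cosimplicialLatchingMap (X : CosimplicialObject M) (n : ℕ)
    [HasColimit (cosimplicialLatchingDiagram X n)] :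
    colimit (cosimplicialLatchingDiagram X n) ⟶ X.obj (SimplexCategory.mk n) :=
  colimit.desc _ (cosimplicialLatchingCocone X n)
variable {M : Type u} [Category.{v} M]

/-- The matching category of a cosimplicial object at `[n]`: proper epimorphisms `[n] ↠ [m]`. -/
abbrev CosimplicialMatchingCat (n : ℕ) : Type :=
  ObjectProperty.FullSubcategory (fun f : Under (SimplexCategory.mk n) => Epi f.hom ∧ f.right.len < n)

/-- The matching diagram of a cosimplicial object at `[n]`. -/
def cosimplicialMatchingDiagram (X : CosimplicialObject M) (n : ℕ) :
    CosimplicialMatchingCat n ⥤ M :=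
  ObjectProperty.ι _ ⋙ Under.forget _ ⋙ X

/-- The canonical cone on the matching diagram with apex `X^n`. -/
def cosimplicialMatchingCone (X : CosimplicialObject M) (n : ℕ) :
    Cone (cosimplicialMatchingDiagram X n) where
  pt := X.obj (SimplexCategory.mk n)
  π :=
    { app := fun f => X.map f.obj.hom
      naturality := by
        intro a b u
        show 𝟙 _ ≫ X.map b.obj.hom = X.map a.obj.hom ≫ X.map u.hom.right
        rw [Category.id_comp, ← X.map_comp, Under.w u.hom] }

/-- The matching map `X^n ⟶ Match_n X` of a cosimplicial object. -/
noncomputable def cosimplicialMatchingMap (X : CosimplicialObject M) (n : ℕ)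
    [HasLimit (cosimplicialMatchingDiagram X n)] :
    X.obj (SimplexCategory.mk n) ⟶ limit (cosimplicialMatchingDiagram X n) :=
  limit.lift _ (cosimplicialMatchingCone X n)

section AuxSpecialCylinder

set_option linter.unusedSectionVars false

open ModelCategory

variable {M : Type u} [Category.{v} M]

lemma SC.eq_mk_of_len_eq {a : SimplexCategory} {n : ℕ} (h : a.len = n) :
    a = SimplexCategory.mk n := by
  rw [← h, SimplexCategory.mk_len]

lemma SC.eq_mk_of_le {a : SimplexCategory} {n : ℕ} (ha : a.len ≤ n + 1)
    (h : ¬ a.len ≤ n) : a = SimplexCategory.mk (n + 1) :=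
  SC.eq_mk_of_len_eq (le_antisymm ha (not_le.mp h))

lemma SC.hom_ext_zero {a b : SimplexCategory} (hb : b.len = 0) (f g : a ⟶ b) : f = g := by
  ext j
  have h1 := (f.toOrderHom j).isLt
  have h2 := (g.toOrderHom j).isLt
  omega

variable [HasFiniteLimits M] [HasFiniteColimits M] [ModelCategory M]
variable {x : M} (S X : CosimplicialObject M)
variable (eS : S.obj (SimplexCategory.mk 0) ≅ x) (eX : X.obj (SimplexCategory.mk 0) ≅ x)

/-- A partial map of cosimplicial objects defined up to level `n`, compatible with the
identifications at level `0`. -/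
structure SCPartialMap (n : ℕ) where
  φ : ∀ a : SimplexCategory, a.len ≤ n → (X.obj a ⟶ S.obj a)
  nat : ∀ (a b : SimplexCategory) (ha : a.len ≤ n) (hb : b.len ≤ n) (f : a ⟶ b),
      X.map f ≫ φ b hb = φ a ha ≫ S.map f
  zero : ∀ h : (SimplexCategory.mk 0).len ≤ n,
      φ (SimplexCategory.mk 0) h ≫ eS.hom = eX.hom

/-- The base partial map at level `0`. -/
def SCBase : SCPartialMap S X eS eX 0 where
  φ a ha :=
    X.map (eqToHom (SC.eq_mk_of_len_eq (Nat.le_zero.mp ha))) ≫ (eX.hom ≫ eS.inv) ≫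
      S.map (eqToHom (SC.eq_mk_of_len_eq (Nat.le_zero.mp ha)).symm)
  nat a b ha hb f := by
    have hb0 : b.len = 0 := Nat.le_zero.mp hb
    have hf : f = eqToHom ((SC.eq_mk_of_len_eq (Nat.le_zero.mp ha)).trans
        (SC.eq_mk_of_len_eq hb0).symm) := SC.hom_ext_zero hb0 _ _
    subst hf
    simp [eqToHom_map X, eqToHom_map S]
  zero h := by simp [X.map_id, S.map_id]

section Extend

variable {n : ℕ} [HasColimit (cosimplicialLatchingDiagram X (n + 1))]
  [HasLimit (cosimplicialMatchingDiagram S (n + 1))]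

/-- The cocone on the latching diagram of `X` at `n+1` induced by a partial map. -/
def SCTopCocone (p : SCPartialMap S X eS eX n) :
    Cocone (cosimplicialLatchingDiagram X (n + 1)) where
  pt := S.obj (SimplexCategory.mk (n + 1))
  ι :=
    { app := fun j => p.φ j.obj.left (Nat.lt_succ_iff.mp j.property.2) ≫ S.map j.obj.hom
      naturality := by
        intro j j' u
        show X.map u.hom.left ≫ (p.φ _ _ ≫ S.map j'.obj.hom) = (p.φ _ _ ≫ S.map j.obj.hom) ≫ 𝟙 _
        rw [Category.comp_id, ← Category.assoc,
          p.nat _ _ (Nat.lt_succ_iff.mp j.property.2) (Nat.lt_succ_iff.mp j'.property.2) u.hom.left,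
          Category.assoc, ← S.map_comp, Over.w u.hom] }

/-- The cone on the matching diagram of `S` at `n+1` induced by a partial map. -/
def SCBotCone (p : SCPartialMap S X eS eX n) :
    Cone (cosimplicialMatchingDiagram S (n + 1)) where
  pt := X.obj (SimplexCategory.mk (n + 1))
  π :=
    { app := fun k => X.map k.obj.hom ≫ p.φ k.obj.right (Nat.lt_succ_iff.mp k.property.2)
      naturality := by
        intro k k' u
        show 𝟙 _ ≫ (X.map k'.obj.hom ≫ p.φ _ _) = (X.map k.obj.hom ≫ p.φ _ _) ≫ S.map u.hom.right
        rw [Category.id_comp, Category.assoc,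
          ← p.nat _ _ (Nat.lt_succ_iff.mp k.property.2) (Nat.lt_succ_iff.mp k'.property.2) u.hom.right,
          ← Category.assoc, ← X.map_comp, Under.w u.hom] }

lemma SCCommSq (p : SCPartialMap S X eS eX n) :
    CommSq (colimit.desc _ (SCTopCocone S X eS eX p)) (cosimplicialLatchingMap X (n + 1))
      (cosimplicialMatchingMap S (n + 1)) (limit.lift _ (SCBotCone S X eS eX p)) := by
  constructor
  apply colimit.hom_ext
  intro j
  apply limit.hom_ext
  intro k
  have hj : j.obj.left.len ≤ n := Nat.lt_succ_iff.mp j.property.2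
  have hk : k.obj.right.len ≤ n := Nat.lt_succ_iff.mp k.property.2
  have e1 : colimit.ι _ j ≫ colimit.desc _ (SCTopCocone S X eS eX p) = p.φ _ hj ≫ S.map j.obj.hom :=
    colimit.ι_desc _ _
  have e2 : cosimplicialMatchingMap S (n + 1) ≫ limit.π _ k = S.map k.obj.hom := limit.lift_π _ _
  have e3 : colimit.ι _ j ≫ cosimplicialLatchingMap X (n + 1) = X.map j.obj.hom := colimit.ι_desc _ _
  have e4 : limit.lift _ (SCBotCone S X eS eX p) ≫ limit.π _ k = X.map k.obj.hom ≫ p.φ _ hk :=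
    limit.lift_π _ _
  show (colimit.ι _ j ≫ colimit.desc _ (SCTopCocone S X eS eX p) ≫
      cosimplicialMatchingMap S (n + 1)) ≫ limit.π _ k = (colimit.ι _ j ≫
      cosimplicialLatchingMap X (n + 1) ≫ limit.lift _ (SCBotCone S X eS eX p)) ≫ limit.π _ k
  refine ((congrArg (· ≫ limit.π _ k) (Category.assoc _ _ _).symm).trans (Category.assoc _ _ _)).trans ?_
  refine (congrArg₂ (· ≫ ·) e1 e2).trans ?_
  refine Eq.trans ?_ ((congrArg (· ≫ limit.π _ k) (Category.assoc _ _ _).symm).trans (Category.assoc _ _ _)).symm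
  refine Eq.trans ?_ (congrArg₂ (· ≫ ·) e3 e4).symm
  have fin : (p.φ _ hj ≫ S.map j.obj.hom) ≫ S.map k.obj.hom =
      X.map j.obj.hom ≫ X.map k.obj.hom ≫ p.φ _ hk := by
    rw [Category.assoc, ← S.map_comp, ← Category.assoc, ← X.map_comp,
      p.nat _ _ hj hk (j.obj.hom ≫ k.obj.hom)]
  exact fin

variable (p : SCPartialMap S X eS eX n)
  (l : X.obj (SimplexCategory.mk (n + 1)) ⟶ S.obj (SimplexCategory.mk (n + 1)))

/-- The extension of the level-`≤ n` data by `l` at level `n+1`. -/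
def SCExtφ : ∀ a : SimplexCategory, a.len ≤ n + 1 → (X.obj a ⟶ S.obj a) := fun a ha =>
  if h : a.len ≤ n then p.φ a h
  else X.map (eqToHom (SC.eq_mk_of_le ha h)) ≫ l ≫ S.map (eqToHom (SC.eq_mk_of_le ha h).symm)

lemma SCExtφ_pos {a : SimplexCategory} (ha : a.len ≤ n + 1) (h : a.len ≤ n) :
    SCExtφ S X eS eX p l a ha = p.φ a h := dif_pos h

lemma SCExtφ_neg {a : SimplexCategory} (ha : a.len ≤ n + 1) (h : ¬ a.len ≤ n) :
    SCExtφ S X eS eX p l a ha =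
      X.map (eqToHom (SC.eq_mk_of_le ha h)) ≫ l ≫ S.map (eqToHom (SC.eq_mk_of_le ha h).symm) :=
  dif_neg h

lemma SCExtφ_natMono
    (stepA : ∀ (a : SimplexCategory) (i : a ⟶ SimplexCategory.mk (n + 1)), Mono i →
      ∀ (ha : a.len ≤ n), X.map i ≫ l = p.φ a ha ≫ S.map i)
    {a b : SimplexCategory} (ha : a.len ≤ n + 1) (hb : b.len ≤ n + 1) (i : a ⟶ b)
    (hi : Mono i) :
    X.map i ≫ SCExtφ S X eS eX p l b hb = SCExtφ S X eS eX p l a ha ≫ S.map i := by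
  haveI := hi
  by_cases hb' : b.len ≤ n
  · have ha' : a.len ≤ n := (SimplexCategory.len_le_of_mono i).trans hb'
    rw [SCExtφ_pos S X eS eX p l hb hb', SCExtφ_pos S X eS eX p l ha ha']
    exact p.nat a b ha' hb' i
  · have hbe : b = SimplexCategory.mk (n + 1) := SC.eq_mk_of_le hb hb'
    by_cases ha' : a.len ≤ n
    · rw [SCExtφ_neg S X eS eX p l hb hb', SCExtφ_pos S X eS eX p l ha ha']
      haveI : Mono (i ≫ eqToHom hbe) := mono_comp _ _
      have key := stepA a (i ≫ eqToHom hbe) inferInstance ha'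
      calc X.map i ≫ X.map (eqToHom (SC.eq_mk_of_le hb hb')) ≫ l ≫
            S.map (eqToHom (SC.eq_mk_of_le hb hb').symm)
          = (X.map (i ≫ eqToHom hbe) ≫ l) ≫ S.map (eqToHom hbe.symm) := by
            rw [X.map_comp]; simp only [Category.assoc]
        _ = (p.φ a ha' ≫ S.map (i ≫ eqToHom hbe)) ≫ S.map (eqToHom hbe.symm) := by rw [key]
        _ = p.φ a ha' ≫ S.map i := by
            rw [S.map_comp]
            simp only [Category.assoc, ← S.map_comp, eqToHom_trans, eqToHom_refl,
              S.map_id, Category.comp_id]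
    · have hae : a = SimplexCategory.mk (n + 1) := SC.eq_mk_of_le ha ha'
      haveI : Mono (eqToHom hae.symm ≫ i ≫ eqToHom hbe) := by
        haveI : Mono (i ≫ eqToHom hbe) := mono_comp _ _
        exact mono_comp _ _
      have hid : eqToHom hae.symm ≫ i ≫ eqToHom hbe = 𝟙 _ :=
        SimplexCategory.eq_id_of_mono _
      have hieq : i = eqToHom (hae.trans hbe.symm) := by
        calc i = eqToHom hae ≫ (eqToHom hae.symm ≫ i ≫ eqToHom hbe) ≫ eqToHom hbe.symm := by
              simp
          _ = eqToHom (hae.trans hbe.symm) := by rw [hid]; simp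
      rw [SCExtφ_neg S X eS eX p l hb hb', SCExtφ_neg S X eS eX p l ha ha', hieq]
      simp [eqToHom_map X, eqToHom_map S]

lemma SCExtφ_natEpi
    (stepB : ∀ (c : SimplexCategory) (e : SimplexCategory.mk (n + 1) ⟶ c), Epi e →
      ∀ (hc : c.len ≤ n), l ≫ S.map e = X.map e ≫ p.φ c hc)
    {a b : SimplexCategory} (ha : a.len ≤ n + 1) (hb : b.len ≤ n + 1) (e : a ⟶ b)
    (he : Epi e) :
    X.map e ≫ SCExtφ S X eS eX p l b hb = SCExtφ S X eS eX p l a ha ≫ S.map e := by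
  haveI := he
  by_cases ha' : a.len ≤ n
  · have hb' : b.len ≤ n := (SimplexCategory.len_le_of_epi e).trans ha'
    rw [SCExtφ_pos S X eS eX p l hb hb', SCExtφ_pos S X eS eX p l ha ha']
    exact p.nat a b ha' hb' e
  · have hae : a = SimplexCategory.mk (n + 1) := SC.eq_mk_of_le ha ha'
    by_cases hb' : b.len ≤ n
    · rw [SCExtφ_pos S X eS eX p l hb hb', SCExtφ_neg S X eS eX p l ha ha']
      haveI : Epi (eqToHom hae.symm ≫ e) := epi_comp _ _
      have key := stepB b (eqToHom hae.symm ≫ e) inferInstance hb'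
      calc X.map e ≫ p.φ b hb'
          = X.map (eqToHom (SC.eq_mk_of_le ha ha')) ≫ X.map (eqToHom hae.symm ≫ e) ≫
              p.φ b hb' := by
            rw [X.map_comp]
            simp only [← Category.assoc, ← X.map_comp, eqToHom_trans, eqToHom_refl, X.map_id,
              Category.id_comp]
        _ = X.map (eqToHom (SC.eq_mk_of_le ha ha')) ≫ l ≫ S.map (eqToHom hae.symm ≫ e) := by
            rw [key]
        _ = (X.map (eqToHom (SC.eq_mk_of_le ha ha')) ≫ l ≫
              S.map (eqToHom (SC.eq_mk_of_le ha ha').symm)) ≫ S.map e := by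
            rw [S.map_comp]; simp only [Category.assoc]
    · have hbe : b = SimplexCategory.mk (n + 1) := SC.eq_mk_of_le hb hb'
      haveI : Epi (eqToHom hae.symm ≫ e ≫ eqToHom hbe) := by
        haveI : Epi (e ≫ eqToHom hbe) := epi_comp _ _
        exact epi_comp _ _
      have hid : eqToHom hae.symm ≫ e ≫ eqToHom hbe = 𝟙 _ :=
        SimplexCategory.eq_id_of_epi _
      have hieq : e = eqToHom (hae.trans hbe.symm) := by
        calc e = eqToHom hae ≫ (eqToHom hae.symm ≫ e ≫ eqToHom hbe) ≫ eqToHom hbe.symm := by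
              simp
          _ = eqToHom (hae.trans hbe.symm) := by rw [hid]; simp
      rw [SCExtφ_neg S X eS eX p l hb hb', SCExtφ_neg S X eS eX p l ha ha', hieq]
      simp [eqToHom_map X, eqToHom_map S]

lemma SCExtφ_nat
    (stepA : ∀ (a : SimplexCategory) (i : a ⟶ SimplexCategory.mk (n + 1)), Mono i →
      ∀ (ha : a.len ≤ n), X.map i ≫ l = p.φ a ha ≫ S.map i)
    (stepB : ∀ (c : SimplexCategory) (e : SimplexCategory.mk (n + 1) ⟶ c), Epi e →
      ∀ (hc : c.len ≤ n), l ≫ S.map e = X.map e ≫ p.φ c hc)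
    (a b : SimplexCategory) (ha : a.len ≤ n + 1) (hb : b.len ≤ n + 1) (f : a ⟶ b) :
    X.map f ≫ SCExtφ S X eS eX p l b hb = SCExtφ S X eS eX p l a ha ≫ S.map f := by
  have fac : factorThruImage f ≫ image.ι f = f := image.fac f
  have hcb : (image f).len ≤ b.len :=
    SimplexCategory.len_le_of_mono (f := image.ι f)
  have hc : (image f).len ≤ n + 1 := hcb.trans hb
  calc X.map f ≫ SCExtφ S X eS eX p l b hb
      = X.map (factorThruImage f) ≫ X.map (image.ι f) ≫ SCExtφ S X eS eX p l b hb := by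
        conv_lhs => rw [← fac, X.map_comp, Category.assoc]
    _ = X.map (factorThruImage f) ≫ SCExtφ S X eS eX p l (image f) hc ≫ S.map (image.ι f) := by
        rw [SCExtφ_natMono S X eS eX p l stepA hc hb (image.ι f) inferInstance]
    _ = (SCExtφ S X eS eX p l a ha ≫ S.map (factorThruImage f)) ≫ S.map (image.ι f) := by
        rw [← Category.assoc,
          SCExtφ_natEpi S X eS eX p l stepB ha hc (factorThruImage f) inferInstance]
    _ = SCExtφ S X eS eX p l a ha ≫ S.map f := by
        rw [Category.assoc, ← S.map_comp, fac]

/-- Extension of a partial map from level `n` to level `n+1`. -/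
lemma SCExtend (hc : Cof (M := M) (cosimplicialLatchingMap X (n + 1)))
    (hf : Fib (M := M) (cosimplicialMatchingMap S (n + 1)))
    (hw : W (M := M) (cosimplicialMatchingMap S (n + 1))) :
    ∃ q : SCPartialMap S X eS eX (n + 1),
      ∀ (a : SimplexCategory) (ha : a.len ≤ n), q.φ a (ha.trans (Nat.le_succ n)) = p.φ a ha := by
  haveI : HasLiftingProperty (cosimplicialLatchingMap X (n + 1))
      (cosimplicialMatchingMap S (n + 1)) := lift_triv_fib _ _ hc hf hw
  have sq := SCCommSq S X eS eX p
  obtain ⟨L⟩ := (HasLiftingProperty.sq_hasLift (i := cosimplicialLatchingMap X (n + 1))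
    (p := cosimplicialMatchingMap S (n + 1)) sq).exists_lift
  set l := L.l with hldef
  have facl : cosimplicialLatchingMap X (n + 1) ≫ l =
      colimit.desc _ (SCTopCocone S X eS eX p) := L.fac_left
  have facr : l ≫ cosimplicialMatchingMap S (n + 1) =
      limit.lift _ (SCBotCone S X eS eX p) := L.fac_right
  have stepA : ∀ (a : SimplexCategory) (i : a ⟶ SimplexCategory.mk (n + 1)), Mono i →
      ∀ (ha : a.len ≤ n), X.map i ≫ l = p.φ a ha ≫ S.map i := by
    intro a i hi ha
    haveI := hi
    let j : CosimplicialLatchingCat (n + 1) :=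
      ⟨Over.mk i, ⟨by simpa using hi, by simpa using Nat.lt_succ_of_le ha⟩⟩
    have h1 : colimit.ι (cosimplicialLatchingDiagram X (n + 1)) j ≫
        cosimplicialLatchingMap X (n + 1) = X.map i := colimit.ι_desc _ _
    exact Eq.trans (by rw [← Category.assoc, h1]; rfl : X.map i ≫ l
        = colimit.ι (cosimplicialLatchingDiagram X (n + 1)) j ≫
            cosimplicialLatchingMap X (n + 1) ≫ l)
      (Eq.trans (by rw [facl]; rfl : colimit.ι (cosimplicialLatchingDiagram X (n + 1)) j ≫
            cosimplicialLatchingMap X (n + 1) ≫ l = colimit.ι (cosimplicialLatchingDiagram X (n + 1)) j ≫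
            colimit.desc _ (SCTopCocone S X eS eX p))
      (colimit.ι_desc _ _ : _ = p.φ a ha ≫ S.map i))
  have stepB : ∀ (c : SimplexCategory) (e : SimplexCategory.mk (n + 1) ⟶ c), Epi e →
      ∀ (hcl : c.len ≤ n), l ≫ S.map e = X.map e ≫ p.φ c hcl := by
    intro c e he hcl
    haveI := he
    let k : CosimplicialMatchingCat (n + 1) :=
      ⟨Under.mk e, ⟨by simpa using he, by simpa using Nat.lt_succ_of_le hcl⟩⟩
    have h1 : cosimplicialMatchingMap S (n + 1) ≫
        limit.π (cosimplicialMatchingDiagram S (n + 1)) k = S.map e := limit.lift_π _ _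
    exact Eq.trans (by rw [Category.assoc, h1]; rfl : l ≫ S.map e
        = (l ≫ cosimplicialMatchingMap S (n + 1)) ≫
            limit.π (cosimplicialMatchingDiagram S (n + 1)) k)
      (Eq.trans (by rw [facr]; rfl : (l ≫ cosimplicialMatchingMap S (n + 1)) ≫
            limit.π (cosimplicialMatchingDiagram S (n + 1)) k = limit.lift _ (SCBotCone S X eS eX p) ≫
            limit.π (cosimplicialMatchingDiagram S (n + 1)) k)
      (limit.lift_π _ _ : _ = X.map e ≫ p.φ c hcl))
  refine ⟨⟨SCExtφ S X eS eX p l, SCExtφ_nat S X eS eX p l stepA stepB, ?_⟩, ?_⟩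
  · intro h
    rw [SCExtφ_pos S X eS eX p l h (by simpa using Nat.zero_le n)]
    exact p.zero (by simpa using Nat.zero_le n)
  · intro a ha
    exact SCExtφ_pos S X eS eX p l (ha.trans (Nat.le_succ n)) ha

end Extend

section Glue

variable [∀ k : ℕ, HasColimit (cosimplicialLatchingDiagram X k)]
  [∀ k : ℕ, HasLimit (cosimplicialMatchingDiagram S k)]
  (hXlatch : ∀ n : ℕ, 1 ≤ n → Cof (M := M) (cosimplicialLatchingMap X n))
  (hSmatch : ∀ n : ℕ, 1 ≤ n →
    W (M := M) (cosimplicialMatchingMap S n) ∧ Fib (M := M) (cosimplicialMatchingMap S n))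

/-- The chain of compatible partial maps, built by induction using the lifting axiom. -/
noncomputable def SCChain : ∀ n : ℕ, SCPartialMap S X eS eX n := fun n =>
  Nat.rec (SCBase S X eS eX)
    (fun m p => (SCExtend S X eS eX p (hXlatch (m + 1) (Nat.le_add_left 1 m))
      ((hSmatch (m + 1) (Nat.le_add_left 1 m)).2)
      ((hSmatch (m + 1) (Nat.le_add_left 1 m)).1)).choose) n

lemma SCChain_succ (m : ℕ) (a : SimplexCategory) (ha : a.len ≤ m) :
    (SCChain S X eS eX hXlatch hSmatch (m + 1)).φ a (ha.trans (Nat.le_succ m)) =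
      (SCChain S X eS eX hXlatch hSmatch m).φ a ha :=
  (SCExtend S X eS eX (SCChain S X eS eX hXlatch hSmatch m)
    (hXlatch (m + 1) (Nat.le_add_left 1 m)) ((hSmatch (m + 1) (Nat.le_add_left 1 m)).2)
    ((hSmatch (m + 1) (Nat.le_add_left 1 m)).1)).choose_spec a ha

include hXlatch hSmatch in
/-- Existence of a globally defined natural family. -/
lemma SCGlobal : ∃ Φ : ∀ a : SimplexCategory, X.obj a ⟶ S.obj a,
    (∀ (a b : SimplexCategory) (f : a ⟶ b), X.map f ≫ Φ b = Φ a ≫ S.map f) ∧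
      Φ (SimplexCategory.mk 0) ≫ eS.hom = eX.hom := by
  have hcast : ∀ {m k : ℕ} (h : m = k) (a : SimplexCategory) (pa : a.len ≤ m) (qa : a.len ≤ k),
      (SCChain S X eS eX hXlatch hSmatch m).φ a pa =
        (SCChain S X eS eX hXlatch hSmatch k).φ a qa := by
    intro m k h a pa qa
    subst h
    rfl
  have hagree : ∀ (m : ℕ) (a : SimplexCategory) (ha : a.len ≤ m),
      (SCChain S X eS eX hXlatch hSmatch m).φ a ha =
        (SCChain S X eS eX hXlatch hSmatch a.len).φ a le_rfl := by
    intro m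
    induction m with
    | zero => exact fun a ha => hcast (Nat.le_zero.mp ha).symm a ha le_rfl
    | succ m ih =>
      intro a ha
      by_cases h : a.len ≤ m
      · have h1 : (SCChain S X eS eX hXlatch hSmatch (m + 1)).φ a ha =
            (SCChain S X eS eX hXlatch hSmatch m).φ a h :=
          SCChain_succ S X eS eX hXlatch hSmatch m a h
        rw [h1]
        exact ih a h
      · exact hcast (le_antisymm ha (not_le.mp h)).symm a ha le_rfl
  refine ⟨fun a => (SCChain S X eS eX hXlatch hSmatch a.len).φ a le_rfl, ?_, ?_⟩
  · intro a b f
    have hna := (SCChain S X eS eX hXlatch hSmatch (max a.len b.len)).nat a b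
      (le_max_left _ _) (le_max_right _ _) f
    rwa [hagree (max a.len b.len) a (le_max_left _ _),
      hagree (max a.len b.len) b (le_max_right _ _)] at hna
  · exact (SCChain S X eS eX hXlatch hSmatch (SimplexCategory.mk 0).len).zero le_rfl

end Glue


end AuxSpecialCylinder

open ModelCategory

/-- A special cylinder object `SCyl^•(x)` is weakly terminal among cylinder
objects for `x`: any cylinder object `Cyl^•(x)` admits a map of cosimplicial objects
`Cyl^•(x) ⟶ SCyl^•(x)` commuting with the identifications of the `0`-th objects with `x`. -/
theorem special_cylinder_weakly_terminal
    {M : Type u} [Category.{v} M] [HasFiniteLimits M] [HasFiniteColimits M] [ModelCategory M]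
    (x : M) (S : CosimplicialObject M)
    [∀ k : ℕ, HasColimit (cosimplicialLatchingDiagram S k)]
    [∀ k : ℕ, HasLimit (cosimplicialMatchingDiagram S k)]
    -- `S` is a special cylinder object for `x`:
    (eS : S.obj (SimplexCategory.mk 0) ≅ x)
    (hSw : ∀ (n : ℕ) (i : Fin (n + 1)), W (M := M) (S.σ i))
    (hSlatch : ∀ n : ℕ, 1 ≤ n → Cof (M := M) (cosimplicialLatchingMap S n))
    (hSfib : ∀ (n : ℕ) (i : Fin (n + 1)), Fib (M := M) (S.σ i))
    (hSmatch : ∀ n : ℕ, 1 ≤ n →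
      W (M := M) (cosimplicialMatchingMap S n) ∧ Fib (M := M) (cosimplicialMatchingMap S n))
    -- `X` is an arbitrary cylinder object for `x`:
    (X : CosimplicialObject M)
    [∀ k : ℕ, HasColimit (cosimplicialLatchingDiagram X k)]
    (eX : X.obj (SimplexCategory.mk 0) ≅ x)
    (hXw : ∀ (n : ℕ) (i : Fin (n + 1)), W (M := M) (X.σ i))
    (hXlatch : ∀ n : ℕ, 1 ≤ n → Cof (M := M) (cosimplicialLatchingMap X n)) :
    ∃ φ : X ⟶ S, φ.app (SimplexCategory.mk 0) ≫ eS.hom = eX.hom := by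
  obtain ⟨Φ, hnat, hzero⟩ := SCGlobal S X eS eX hXlatch hSmatch
  exact ⟨{ app := fun a => Φ a, naturality := fun a b f => hnat a b f }, hzero⟩
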